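/- Define h(x) = Γ(1+3x) - 2Γ(1+2x) + Γ(1+x) for x ∈ (0, 1/5). Then h(0) = 0, h'(0) = 0, and h(x) ≤ 2x² for all 0 < x < 1/5. -/

import Mathlib

open Real MeasureTheory Set Filter Topology

namespace GammaComb

/-! ### Antiderivatives for `t ^ k * exp (-t)` -/

noncomputable def Efn : ℕ → ℝ → ℝ
  | 0, _ => 1
  | (k+1), t => t ^ (k+1) + (k+1 : ℝ) * Efn k t

lemma hasDerivAt_exp_neg (t : ℝ) : HasDerivAt (fun s : ℝ => Real.exp (-s)) (-Real.exp (-t)) t := by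
  exact ((Real.hasDerivAt_exp (-t)).comp t (hasDerivAt_neg t)).congr_deriv (by ring)

lemma hasDerivAt_Efn (k : ℕ) (t : ℝ) :
    HasDerivAt (fun s : ℝ => -(Efn k s * Real.exp (-s))) (t ^ k * Real.exp (-t)) t := by
  induction k with
  | zero =>
    have h := (hasDerivAt_exp_neg t).fun_neg
    simpa [Efn] using h
  | succ n ih =>
    have h1 : HasDerivAt (fun s : ℝ => -(s ^ (n+1) * Real.exp (-s)))
        (t ^ (n+1) * Real.exp (-t) - (n+1 : ℝ) * t ^ n * Real.exp (-t)) t := by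
      have := ((hasDerivAt_pow (n+1) t).fun_mul (hasDerivAt_exp_neg t)).fun_neg
      refine this.congr_deriv ?_
      push_cast
      ring
    have h2 := ih.const_mul ((n+1 : ℝ))
    have h3 := h1.fun_add h2
    have heq : (fun s : ℝ => -(s ^ (n+1) * Real.exp (-s)) + (n+1 : ℝ) * -(Efn n s * Real.exp (-s)))
        = fun s : ℝ => -(Efn (n+1) s * Real.exp (-s)) := by
      funext s
      simp only [Efn]
      ring
    rw [heq] at h3
    refine h3.congr_deriv ?_
    push_cast
    ring

lemma tendsto_Efn (k : ℕ) :
    Tendsto (fun t : ℝ => Efn k t * Real.exp (-t)) atTop (𝓝 0) := by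
  induction k with
  | zero =>
    simpa [Efn] using Real.tendsto_exp_neg_atTop_nhds_zero
  | succ n ih =>
    have h1 := (tendsto_pow_mul_exp_neg_atTop_nhds_zero (n+1)).add (ih.const_mul ((n+1 : ℝ)))
    have heq : (fun t : ℝ => t ^ (n+1) * Real.exp (-t) + (n+1 : ℝ) * (Efn n t * Real.exp (-t)))
        = fun t : ℝ => Efn (n+1) t * Real.exp (-t) := by
      funext t
      simp only [Efn]
      ring
    rw [heq] at h1
    simpa using h1

lemma integrableOn_pow_exp (k : ℕ) {a : ℝ} (ha : 0 ≤ a) :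
    IntegrableOn (fun t : ℝ => t ^ k * Real.exp (-t)) (Ioi a) := by
  have h := Real.GammaIntegral_convergent (s := (k : ℝ) + 1) (by positivity)
  have h' : IntegrableOn (fun t : ℝ => t ^ k * Real.exp (-t)) (Ioi (0:ℝ)) := by
    refine h.congr_fun (fun t ht => ?_) measurableSet_Ioi
    have : ((k : ℝ) + 1 - 1) = (k : ℝ) := by ring
    rw [this]
    beta_reduce
    rw [Real.rpow_natCast, mul_comm]
  exact h'.mono_set (Ioi_subset_Ioi ha)

lemma integrableOn_cubic_exp (c0 c1 c2 c3 : ℝ) {a : ℝ} (ha : 0 ≤ a) :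
    IntegrableOn (fun t : ℝ => (c0 + c1*t + c2*t^2 + c3*t^3) * Real.exp (-t)) (Ioi a) := by
  have heq : (fun t : ℝ => (c0 + c1*t + c2*t^2 + c3*t^3) * Real.exp (-t))
      = fun t : ℝ => c0*(t^0*Real.exp (-t)) + c1*(t^1*Real.exp (-t)) + c2*(t^2*Real.exp (-t))
        + c3*(t^3*Real.exp (-t)) := by
    funext t; ring
  rw [heq]
  exact ((((integrableOn_pow_exp 0 ha).const_mul c0).add
    ((integrableOn_pow_exp 1 ha).const_mul c1)).add
    ((integrableOn_pow_exp 2 ha).const_mul c2)).add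
    ((integrableOn_pow_exp 3 ha).const_mul c3)

lemma integral_cubic_exp_Ioi (c0 c1 c2 c3 : ℝ) {a : ℝ} (ha : 0 ≤ a) :
    ∫ t in Ioi a, (c0 + c1*t + c2*t^2 + c3*t^3) * Real.exp (-t)
      = (c0 * Efn 0 a + c1 * Efn 1 a + c2 * Efn 2 a + c3 * Efn 3 a) * Real.exp (-a) := by
  have hd : ∀ t ∈ Ici a, HasDerivAt (fun s : ℝ =>
      c0 * -(Efn 0 s * Real.exp (-s)) + c1 * -(Efn 1 s * Real.exp (-s))
        + c2 * -(Efn 2 s * Real.exp (-s)) + c3 * -(Efn 3 s * Real.exp (-s)))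
      (c0*(t^0*Real.exp (-t)) + c1*(t^1*Real.exp (-t)) + c2*(t^2*Real.exp (-t))
        + c3*(t^3*Real.exp (-t))) t := by
    intro t _
    exact ((((hasDerivAt_Efn 0 t).const_mul c0).add ((hasDerivAt_Efn 1 t).const_mul c1)).add
      ((hasDerivAt_Efn 2 t).const_mul c2)).add ((hasDerivAt_Efn 3 t).const_mul c3)
  have hint : IntegrableOn (fun t : ℝ => c0*(t^0*Real.exp (-t)) + c1*(t^1*Real.exp (-t))
      + c2*(t^2*Real.exp (-t)) + c3*(t^3*Real.exp (-t))) (Ioi a) := by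
    exact ((((integrableOn_pow_exp 0 ha).const_mul c0).add
      ((integrableOn_pow_exp 1 ha).const_mul c1)).add
      ((integrableOn_pow_exp 2 ha).const_mul c2)).add
      ((integrableOn_pow_exp 3 ha).const_mul c3)
  have htend : Tendsto (fun t : ℝ =>
      c0 * -(Efn 0 t * Real.exp (-t)) + c1 * -(Efn 1 t * Real.exp (-t))
        + c2 * -(Efn 2 t * Real.exp (-t)) + c3 * -(Efn 3 t * Real.exp (-t))) atTop (𝓝 0) := by
    have := ((((tendsto_Efn 0).neg.const_mul c0).add ((tendsto_Efn 1).neg.const_mul c1)).add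
      ((tendsto_Efn 2).neg.const_mul c2)).add ((tendsto_Efn 3).neg.const_mul c3)
    simpa using this
  have hmain := MeasureTheory.integral_Ioi_of_hasDerivAt_of_tendsto' hd hint htend
  calc ∫ t in Ioi a, (c0 + c1*t + c2*t^2 + c3*t^3) * Real.exp (-t)
      = ∫ t in Ioi a, (c0*(t^0*Real.exp (-t)) + c1*(t^1*Real.exp (-t)) + c2*(t^2*Real.exp (-t))
        + c3*(t^3*Real.exp (-t))) := by
        refine setIntegral_congr_fun measurableSet_Ioi (fun t _ => ?_)
        ring
    _ = 0 - (c0 * -(Efn 0 a * Real.exp (-a)) + c1 * -(Efn 1 a * Real.exp (-a))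
        + c2 * -(Efn 2 a * Real.exp (-a)) + c3 * -(Efn 3 a * Real.exp (-a))) := hmain
    _ = (c0 * Efn 0 a + c1 * Efn 1 a + c2 * Efn 2 a + c3 * Efn 3 a) * Real.exp (-a) := by ring

lemma integral_cubic_exp_Ioc (c0 c1 c2 c3 a b : ℝ) (hab : a ≤ b) :
    ∫ t in Ioc a b, (c0 + c1*t + c2*t^2 + c3*t^3) * Real.exp (-t)
      = (c0 * Efn 0 a + c1 * Efn 1 a + c2 * Efn 2 a + c3 * Efn 3 a) * Real.exp (-a)
        - (c0 * Efn 0 b + c1 * Efn 1 b + c2 * Efn 2 b + c3 * Efn 3 b) * Real.exp (-b) := by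
  rw [← intervalIntegral.integral_of_le hab]
  have hd : ∀ t ∈ uIcc a b, HasDerivAt (fun s : ℝ =>
      c0 * -(Efn 0 s * Real.exp (-s)) + c1 * -(Efn 1 s * Real.exp (-s))
        + c2 * -(Efn 2 s * Real.exp (-s)) + c3 * -(Efn 3 s * Real.exp (-s)))
      ((c0 + c1*t + c2*t^2 + c3*t^3) * Real.exp (-t)) t := by
    intro t _
    have := ((((hasDerivAt_Efn 0 t).const_mul c0).fun_add ((hasDerivAt_Efn 1 t).const_mul c1)).fun_add
      ((hasDerivAt_Efn 2 t).const_mul c2)).fun_add ((hasDerivAt_Efn 3 t).const_mul c3)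
    refine this.congr_deriv ?_
    ring
  have hii : IntervalIntegrable (fun t : ℝ => (c0 + c1*t + c2*t^2 + c3*t^3) * Real.exp (-t))
      volume a b := by
    apply Continuous.intervalIntegrable
    fun_prop
  rw [intervalIntegral.integral_eq_sub_of_hasDerivAt hd hii]
  ring

/-! ### Moments on `(0, 1]` -/

lemma image_exp_neg_Ioi : (fun u : ℝ => Real.exp (-u)) '' (Ioi 0) = Ioo (0:ℝ) 1 := by
  ext t
  constructor
  · rintro ⟨u, hu, rfl⟩
    exact ⟨Real.exp_pos _, Real.exp_lt_one_iff.2 (by simpa using hu)⟩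
  · rintro ⟨h0, h1⟩
    refine ⟨-Real.log t, ?_, by simp [Real.exp_log h0]⟩
    simpa using Real.log_neg h0 h1

lemma hasDerivWithinAt_exp_neg (u : ℝ) :
    HasDerivWithinAt (fun u : ℝ => Real.exp (-u)) (-Real.exp (-u)) (Ioi 0) u :=
  (hasDerivAt_exp_neg u).hasDerivWithinAt

lemma injOn_exp_neg : InjOn (fun u : ℝ => Real.exp (-u)) (Ioi 0) := by
  intro a _ b _ h
  have := Real.exp_injective h
  linarith [this]

lemma moment_eq (n m : ℕ) :
    ∫ t in Ioc (0:ℝ) 1, t ^ n * Real.log t ^ m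
      = (-1)^m * (m.factorial : ℝ) / ((n:ℝ)+1)^(m+1) := by
  rw [integral_Ioc_eq_integral_Ioo, ← image_exp_neg_Ioi,
    integral_image_eq_integral_abs_deriv_smul measurableSet_Ioi
      (fun u _ => hasDerivWithinAt_exp_neg u) injOn_exp_neg]
  have heq : ∀ u ∈ Ioi (0:ℝ),
      |(-Real.exp (-u))| • ((Real.exp (-u)) ^ n * Real.log (Real.exp (-u)) ^ m)
        = (-1)^m * (u ^ (((m:ℝ)+1) - 1) * Real.exp (-(((n:ℝ)+1) * u))) := by
    intro u hu
    have h1 : |(-Real.exp (-u))| = Real.exp (-u) := by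
      rw [abs_neg, abs_of_pos (Real.exp_pos _)]
    rw [h1, Real.log_exp, smul_eq_mul]
    have h2 : ((m:ℝ)+1) - 1 = (m : ℝ) := by ring
    rw [h2, Real.rpow_natCast]
    have h3 : Real.exp (-u) * Real.exp (-u) ^ n = Real.exp (-(((n:ℝ)+1) * u)) := by
      rw [← Real.exp_nat_mul, ← Real.exp_add]
      congr 1
      push_cast
      ring
    calc Real.exp (-u) * ((Real.exp (-u)) ^ n * (-u) ^ m)
        = (Real.exp (-u) * Real.exp (-u) ^ n) * (-u)^m := by ring
      _ = (-1)^m * (u ^ m * Real.exp (-(((n:ℝ)+1) * u))) := by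
          rw [neg_pow]
          linear_combination ((-1:ℝ))^m * u^m * h3
  rw [setIntegral_congr_fun measurableSet_Ioi heq, integral_const_mul,
    Real.integral_rpow_mul_exp_neg_mul_Ioi (by positivity : (0:ℝ) < (m:ℝ)+1)
      (by positivity : (0:ℝ) < (n:ℝ)+1)]
  have h4 : ((m:ℝ)+1) = ((m+1 : ℕ) : ℝ) := by push_cast; ring
  rw [h4, Real.rpow_natCast]
  have h5 : Real.Gamma (((m+1 : ℕ) : ℝ)) = (m.factorial : ℝ) := by
    push_cast
    exact Real.Gamma_nat_eq_factorial m
  rw [h5, one_div, inv_pow]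
  field_simp

lemma moment_integrable (n m : ℕ) :
    IntegrableOn (fun t : ℝ => t ^ n * Real.log t ^ m) (Ioc (0:ℝ) 1) := by
  rw [integrableOn_Ioc_iff_integrableOn_Ioo, ← image_exp_neg_Ioi,
    integrableOn_image_iff_integrableOn_abs_deriv_smul measurableSet_Ioi
      (fun u _ => hasDerivWithinAt_exp_neg u) injOn_exp_neg]
  refine Integrable.mono' (integrableOn_pow_exp m le_rfl)
    (Measurable.aestronglyMeasurable ?_) ?_
  · have m1 : Measurable fun u : ℝ => Real.exp (-u) := Real.measurable_exp.comp measurable_neg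
    exact (m1.neg.abs).smul ((m1.pow_const n).mul ((Real.measurable_log.comp m1).pow_const m))
  refine (ae_restrict_mem measurableSet_Ioi).mono (fun u hu => ?_)
  have hu0 : (0:ℝ) < u := hu
  have h1 : |(-Real.exp (-u))| = Real.exp (-u) := by
    rw [abs_neg, abs_of_pos (Real.exp_pos _)]
  rw [smul_eq_mul, h1]
  have h2 : ‖Real.exp (-u) * ((Real.exp (-u)) ^ n * (Real.log (Real.exp (-u))) ^ m)‖
      = Real.exp (-u) * ((Real.exp (-u)) ^ n * u ^ m) := by
    rw [Real.log_exp, norm_eq_abs, abs_mul, abs_of_pos (Real.exp_pos _), abs_mul,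
      abs_pow, abs_pow, abs_of_pos (Real.exp_pos _), abs_neg, abs_of_pos hu0]
  rw [h2]
  have h3 : (Real.exp (-u)) ^ n ≤ 1 := by
    apply pow_le_one₀ (Real.exp_pos _).le
    rw [← Real.exp_zero]
    exact Real.exp_le_exp.2 (by linarith)
  have h4 : (0:ℝ) ≤ u ^ m := by positivity
  nlinarith [mul_le_mul_of_nonneg_left h3 (mul_nonneg (Real.exp_pos (-u)).le h4),
    Real.exp_pos (-u)]

/-! ### Pointwise inequalities -/

lemma exp_le_quadratic {u : ℝ} (hu : u ≤ 0) : Real.exp u ≤ 1 + u + u^2/2 := by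
  have h2 : 1 + (-u) + (-u)^2/2 ≤ Real.exp (-u) := by
    have h := Real.sum_le_exp_of_nonneg (x := -u) (by linarith) 3
    have heval : ∑ i ∈ Finset.range 3, (-u) ^ i / (i.factorial : ℝ)
        = 1 + (-u) + (-u)^2/2 := by
      norm_num [Finset.sum_range_succ, Nat.factorial]
    linarith [h, heval.le, heval.ge]
  have key : 1 ≤ (1 + u + u^2/2) * Real.exp (-u) := by
    have hq : (0:ℝ) ≤ 1 + u + u^2/2 := by nlinarith [sq_nonneg (u+1)]
    have := mul_le_mul_of_nonneg_left h2 hq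
    nlinarith [this]
  have := mul_le_mul_of_nonneg_left key (Real.exp_pos u).le
  calc Real.exp u = Real.exp u * 1 := by ring
    _ ≤ Real.exp u * ((1 + u + u^2/2) * Real.exp (-u)) := this
    _ = (1 + u + u^2/2) * (Real.exp u * Real.exp (-u)) := by ring
    _ = 1 + u + u^2/2 := by rw [← Real.exp_add]; simp

lemma quartic_bound {t : ℝ} (ht : 0 ≤ t) :
    Real.exp (-t) ≤ 1 - t + t^2/2 - t^3/6 + t^4/24 := by
  have hE : 1 + t + t^2/2 + t^3/6 + t^4/24 ≤ Real.exp t := by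
    have h := Real.sum_le_exp_of_nonneg ht 5
    have heval : ∑ i ∈ Finset.range 5, t ^ i / (i.factorial : ℝ)
        = 1 + t + t^2/2 + t^3/6 + t^4/24 := by
      norm_num [Finset.sum_range_succ, Nat.factorial]
    linarith [h, heval.le, heval.ge]
  have hP : (0:ℝ) ≤ 1 - t + t^2/2 - t^3/6 + t^4/24 := by
    nlinarith [sq_nonneg (t^2 - 2*t), sq_nonneg (t - 3/2)]
  have h1 : Real.exp (-t) * Real.exp t = 1 := by rw [← Real.exp_add]; simp
  nlinarith [mul_le_mul_of_nonneg_left hE hP, Real.exp_pos t, Real.exp_pos (-t),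
    mul_le_mul_of_nonneg_right hE (Real.exp_pos (-t)).le, pow_nonneg ht 6, pow_nonneg ht 8]

lemma log_tangent {c1 c2 t : ℝ} (hc2 : 0 < c2) (hb : Real.exp (-1 - c1) ≤ c2) (ht : 0 < t) :
    Real.log t ≤ c1 + c2 * t := by
  have h1 : Real.log (c2*t) ≤ c2*t - 1 := Real.log_le_sub_one_of_pos (by positivity)
  rw [Real.log_mul (ne_of_gt hc2) (ne_of_gt ht)] at h1
  have h2 : -1 - c1 ≤ Real.log c2 := (Real.le_log_iff_exp_le hc2).2 hb
  linarith

lemma exp_bound_quarter : Real.exp (-1 - (-3/4) : ℝ) ≤ 77881/100000 := by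
  have h : Real.exp (-1 - (-3/4) : ℝ) ^ (4:ℕ) = Real.exp (-1) := by
    rw [← Real.exp_nat_mul]
    norm_num
  have h1 : Real.exp (-1) < 0.3678794412 := Real.exp_neg_one_lt_d9
  refine le_of_pow_le_pow_left₀ (by norm_num) (by norm_num) (n := 4) ?_
  rw [h]
  nlinarith [h1]

lemma exp_bound_half : Real.exp (-1 - (-1/2) : ℝ) ≤ 3033/5000 := by
  have h : Real.exp (-1 - (-1/2) : ℝ) ^ (2:ℕ) = Real.exp (-1) := by
    rw [← Real.exp_nat_mul]
    norm_num
  have h1 : Real.exp (-1) < 0.3678794412 := Real.exp_neg_one_lt_d9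
  refine le_of_pow_le_pow_left₀ (by norm_num) (by norm_num) (n := 2) ?_
  rw [h]
  nlinarith [h1]

lemma exp_bound_seven_sixth : Real.exp (-1 - (1/6) : ℝ) ≤ 39/125 := by
  have h : Real.exp (-1 - (1/6) : ℝ) ^ (6:ℕ) = Real.exp (-1) ^ (7:ℕ) := by
    rw [← Real.exp_nat_mul, ← Real.exp_nat_mul]
    norm_num
  have h1 : Real.exp (-1) < 0.3678794412 := Real.exp_neg_one_lt_d9
  refine le_of_pow_le_pow_left₀ (by norm_num) (by norm_num) (n := 6) ?_
  rw [h]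
  calc Real.exp (-1) ^ (7:ℕ) ≤ (0.3678794412 : ℝ)^(7:ℕ) := by
        exact pow_le_pow_left₀ (Real.exp_pos _).le h1.le 7
    _ ≤ (39/125 : ℝ)^(6:ℕ) := by norm_num
    _ = ((39:ℝ)/125)^(6:ℕ) := by norm_num

lemma exp15_lower : (0.22313016 : ℝ) ≤ Real.exp (-(3/2)) := by
  have h : Real.exp (-(3/2) : ℝ) ^ (2:ℕ) = Real.exp (-1) ^ (3:ℕ) := by
    rw [← Real.exp_nat_mul, ← Real.exp_nat_mul]
    norm_num
  have h1 : (0.36787944116 : ℝ) < Real.exp (-1) := Real.exp_neg_one_gt_d9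
  refine le_of_pow_le_pow_left₀ (by norm_num) (Real.exp_pos _).le (n := 2) ?_
  rw [h]
  calc (0.22313016:ℝ)^2 ≤ (0.36787944116:ℝ)^3 := by norm_num
    _ ≤ Real.exp (-1)^3 := pow_le_pow_left₀ (by norm_num) h1.le 3

lemma exp2_lower : (0.135335283 : ℝ) ≤ Real.exp (-2) := by
  have h : Real.exp (-2 : ℝ) = Real.exp (-1) ^ (2:ℕ) := by
    rw [← Real.exp_nat_mul]
    norm_num
  have h1 : (0.36787944116 : ℝ) < Real.exp (-1) := Real.exp_neg_one_gt_d9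
  rw [h]
  calc (0.135335283:ℝ) ≤ (0.36787944116:ℝ)^2 := by norm_num
    _ ≤ Real.exp (-1)^2 := pow_le_pow_left₀ (by norm_num) h1.le 2

lemma rpow_le_linear {t p : ℝ} (ht : 1 ≤ t) (hp0 : 0 ≤ p) (hp1 : p ≤ 1) :
    t ^ p ≤ 1 + p * (t - 1) := by
  have h := rpow_one_add_le_one_add_mul_self (s := t-1) (by linarith) hp0 hp1
  have h2 : (1:ℝ) + (t-1) = t := by ring
  rw [h2] at h
  exact h

/-! ### Region pointwise bounds -/

lemma pointwise_le_one {x t : ℝ} (hx : 0 ≤ x) (ht0 : 0 < t) (ht1 : t ≤ 1) :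
    Real.exp (-t) * (t ^ (3*x) - 2 * t ^ (2*x) + t ^ x) ≤
      x^2 * (Real.log t^2*(1 - t + t^2/2 - t^3/6 + t^4/24)
        + x*(Real.log t^3*(1-t)) + (x^2/2)*Real.log t^4) := by
  set L := Real.log t with hLdef
  have hL0 : L ≤ 0 := Real.log_nonpos ht0.le ht1
  have hu : x * L ≤ 0 := mul_nonpos_iff.2 (Or.inl ⟨hx, hL0⟩)
  have hx1 : t ^ x = Real.exp (x*L) := by
    rw [Real.rpow_def_of_pos ht0, mul_comm]
  have hx2 : t ^ (2*x) = Real.exp (x*L) ^ (2:ℕ) := by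
    rw [Real.rpow_def_of_pos ht0, ← Real.exp_nat_mul]
    congr 1
    push_cast
    ring
  have hx3 : t ^ (3*x) = Real.exp (x*L) ^ (3:ℕ) := by
    rw [Real.rpow_def_of_pos ht0, ← Real.exp_nat_mul]
    congr 1
    push_cast
    ring
  set E := Real.exp (x*L) with hEdef
  have hE_pos : 0 < E := Real.exp_pos _
  have hE1 : E ≤ 1 := by
    rw [hEdef, ← Real.exp_zero]
    exact Real.exp_le_exp.2 hu
  have hlow : 1 + x*L ≤ E := by
    have := Real.add_one_le_exp (x*L)
    linarith
  have hquad : E ≤ 1 + x*L + (x*L)^2/2 := exp_le_quadratic hu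
  have hqnn : (0:ℝ) ≤ 1 + x*L + (x*L)^2/2 := by nlinarith [sq_nonneg (x*L+1)]
  have hsq : (E - 1)^2 ≤ (x*L)^2 := by nlinarith [hlow, hE1]
  have hmain : E^3 - 2*E^2 + E ≤ (1 + x*L + (x*L)^2/2) * (x*L)^2 := by
    have h1 : E^3 - 2*E^2 + E = E * (E-1)^2 := by ring
    rw [h1]
    calc E * (E-1)^2 ≤ (1 + x*L + (x*L)^2/2) * (E-1)^2 :=
          mul_le_mul_of_nonneg_right hquad (sq_nonneg _)
      _ ≤ (1 + x*L + (x*L)^2/2) * (x*L)^2 := mul_le_mul_of_nonneg_left hsq hqnn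
  have hstep1 : Real.exp (-t) * (t ^ (3*x) - 2 * t ^ (2*x) + t ^ x)
      ≤ Real.exp (-t) * ((1 + x*L + (x*L)^2/2) * (x*L)^2) := by
    rw [hx1, hx2, hx3]
    exact mul_le_mul_of_nonneg_left hmain (Real.exp_pos _).le
  have hexpand : Real.exp (-t) * ((1 + x*L + (x*L)^2/2) * (x*L)^2)
      = x^2 * (L^2 * Real.exp (-t) + x * (L^3 * Real.exp (-t)) + (x^2/2) * (L^4 * Real.exp (-t))) := by
    ring
  have ha : L^2 * Real.exp (-t) ≤ L^2 * (1 - t + t^2/2 - t^3/6 + t^4/24) :=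
    mul_le_mul_of_nonneg_left (quartic_bound ht0.le) (sq_nonneg L)
  have hb : x * (L^3 * Real.exp (-t)) ≤ x * (L^3 * (1-t)) := by
    have hL3 : L^3 ≤ 0 := Odd.pow_nonpos ⟨1, by norm_num⟩ hL0
    have hge : 1 - t ≤ Real.exp (-t) := by
      have := Real.add_one_le_exp (-t)
      linarith
    exact mul_le_mul_of_nonneg_left (mul_le_mul_of_nonpos_left hge hL3) hx
  have hc : (x^2/2) * (L^4 * Real.exp (-t)) ≤ (x^2/2) * L^4 := by
    have hL4 : (0:ℝ) ≤ L^4 := by positivity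
    have hee : Real.exp (-t) ≤ 1 := by
      rw [← Real.exp_zero]
      exact Real.exp_le_exp.2 (by linarith)
    have : L^4 * Real.exp (-t) ≤ L^4 * 1 := mul_le_mul_of_nonneg_left hee hL4
    nlinarith [this]
  calc Real.exp (-t) * (t ^ (3*x) - 2 * t ^ (2*x) + t ^ x)
      ≤ Real.exp (-t) * ((1 + x*L + (x*L)^2/2) * (x*L)^2) := hstep1
    _ = x^2 * (L^2 * Real.exp (-t) + x * (L^3 * Real.exp (-t)) + (x^2/2) * (L^4 * Real.exp (-t))) :=
        hexpand
    _ ≤ x^2 * (L^2*(1 - t + t^2/2 - t^3/6 + t^4/24) + x*(L^3*(1-t)) + (x^2/2)*L^4) := by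
        have := add_le_add (add_le_add ha hb) hc
        nlinarith [this, sq_nonneg x]

lemma pointwise_ge_one {x t p : ℝ} (hx0 : 0 ≤ x) (hx5 : x ≤ 1/5) (ht : 1 ≤ t)
    (hp : Real.log t ≤ p) :
    Real.exp (-t) * (t ^ (3*x) - 2 * t ^ (2*x) + t ^ x) ≤
      x^2 * ((p^2 + 3*x*((1/6 + (39/125)*t)^2*(t-1))) * Real.exp (-t)) := by
  have ht0 : 0 < t := lt_of_lt_of_le one_pos ht
  set L := Real.log t with hLdef
  have hL0 : 0 ≤ L := Real.log_nonneg ht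
  have hu0 : 0 ≤ x * L := mul_nonneg hx0 hL0
  have hx1 : t ^ x = Real.exp (x*L) := by
    rw [Real.rpow_def_of_pos ht0, mul_comm]
  have hx2 : t ^ (2*x) = Real.exp (x*L) ^ (2:ℕ) := by
    rw [Real.rpow_def_of_pos ht0, ← Real.exp_nat_mul]
    congr 1
    push_cast
    ring
  have hx3 : t ^ (3*x) = Real.exp (x*L) ^ (3:ℕ) := by
    rw [Real.rpow_def_of_pos ht0, ← Real.exp_nat_mul]
    congr 1
    push_cast
    ring
  set E := Real.exp (x*L) with hEdef
  have hE_pos : 0 < E := Real.exp_pos _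
  have hE1 : 1 ≤ E := by
    rw [hEdef, ← Real.exp_zero]
    exact Real.exp_le_exp.2 hu0
  have hprod : E * Real.exp (-(x*L)) = 1 := by
    rw [hEdef, ← Real.exp_add]
    simp
  have hEu : E - 1 ≤ (x*L) * E := by
    have h1 : 1 - (x*L) ≤ Real.exp (-(x*L)) := by
      have := Real.add_one_le_exp (-(x*L))
      linarith
    have h2 := mul_le_mul_of_nonneg_left h1 hE_pos.le
    rw [hprod] at h2
    nlinarith [h2]
  have hsq : (E-1)^2 ≤ (x*L)^2 * E^2 := by
    have h1 : (E-1)^2 ≤ ((x*L)*E)^2 :=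
      pow_le_pow_left₀ (by linarith) hEu 2
    nlinarith [h1]
  have hE3 : E^(3:ℕ) ≤ 1 + (3*x) * (t - 1) := by
    rw [← hx3]
    exact rpow_le_linear ht (by linarith) (by linarith)
  have hLm3 : L ≤ 1/6 + (39/125)*t := by
    rw [hLdef]
    exact log_tangent (by norm_num) exp_bound_seven_sixth ht0
  have hL2p : L^2 ≤ p^2 := pow_le_pow_left₀ hL0 hp 2
  have hL2m : L^2 ≤ (1/6 + (39/125)*t)^2 := pow_le_pow_left₀ hL0 hLm3 2
  have hkey : L^2 * (1 + 3*x*(t-1)) ≤ p^2 + 3*x*((1/6 + (39/125)*t)^2*(t-1)) := by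
    have h3x : 0 ≤ 3*x*(t-1) := by
      apply mul_nonneg (by linarith)
      linarith
    nlinarith [mul_le_mul_of_nonneg_left hL2m h3x, hL2p]
  have hmain : E^3 - 2*E^2 + E ≤ x^2 * (p^2 + 3*x*((1/6 + (39/125)*t)^2*(t-1))) := by
    have h1 : E^3 - 2*E^2 + E = E * (E-1)^2 := by ring
    have h2 : E * (E-1)^2 ≤ E * ((x*L)^2 * E^2) :=
      mul_le_mul_of_nonneg_left hsq hE_pos.le
    have h4 : (x*L)^2 * E^3 ≤ (x*L)^2 * (1 + (3*x)*(t-1)) := by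
      apply mul_le_mul_of_nonneg_left _ (sq_nonneg _)
      exact_mod_cast hE3
    have h5 : (x*L)^2 * (1 + (3*x)*(t-1)) = x^2 * (L^2 * (1 + 3*x*(t-1))) := by ring
    have h6 : x^2 * (L^2 * (1 + 3*x*(t-1))) ≤ x^2 * (p^2 + 3*x*((1/6 + (39/125)*t)^2*(t-1))) :=
      mul_le_mul_of_nonneg_left hkey (sq_nonneg x)
    nlinarith [h2, h4, h6]
  have hstep : Real.exp (-t) * (t ^ (3*x) - 2 * t ^ (2*x) + t ^ x)
      ≤ Real.exp (-t) * (x^2 * (p^2 + 3*x*((1/6 + (39/125)*t)^2*(t-1)))) := by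
    rw [hx1, hx2, hx3]
    exact mul_le_mul_of_nonneg_left hmain (Real.exp_pos _).le
  calc Real.exp (-t) * (t ^ (3*x) - 2 * t ^ (2*x) + t ^ x)
      ≤ Real.exp (-t) * (x^2 * (p^2 + 3*x*((1/6 + (39/125)*t)^2*(t-1)))) := hstep
    _ = x^2 * ((p^2 + 3*x*((1/6 + (39/125)*t)^2*(t-1))) * Real.exp (-t)) := by ring


/-! ### Value of the `(0,1]` majorant -/

lemma D1_integrable (aa bb : ℝ) :
    IntegrableOn (fun t : ℝ => Real.log t^2*(1 - t + t^2/2 - t^3/6 + t^4/24)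
      + aa*(Real.log t^3*(1-t)) + bb*Real.log t^4) (Ioc (0:ℝ) 1) := by
  have heq : (fun t : ℝ => Real.log t^2*(1 - t + t^2/2 - t^3/6 + t^4/24)
      + aa*(Real.log t^3*(1-t)) + bb*Real.log t^4)
      = fun t : ℝ => (1:ℝ)*(t^0*Real.log t^2) + (-1)*(t^1*Real.log t^2)
        + (1/2)*(t^2*Real.log t^2) + (-1/6)*(t^3*Real.log t^2) + (1/24)*(t^4*Real.log t^2)
        + aa*(t^0*Real.log t^3) + (-aa)*(t^1*Real.log t^3) + bb*(t^0*Real.log t^4) := by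
    funext t; ring
  rw [heq]
  exact (((((((((moment_integrable 0 2).const_mul 1).add
    ((moment_integrable 1 2).const_mul (-1))).add
    ((moment_integrable 2 2).const_mul (1/2))).add
    ((moment_integrable 3 2).const_mul (-1/6))).add
    ((moment_integrable 4 2).const_mul (1/24))).add
    ((moment_integrable 0 3).const_mul aa)).add
    ((moment_integrable 1 3).const_mul (-aa))).add
    ((moment_integrable 0 4).const_mul bb))

lemma D1_value (aa bb : ℝ) :
    ∫ t in Ioc (0:ℝ) 1, (Real.log t^2*(1 - t + t^2/2 - t^3/6 + t^4/24)
      + aa*(Real.log t^3*(1-t)) + bb*Real.log t^4)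
      = 385019/216000 + aa * (-45/8) + bb * 24 := by
  have i1 := (moment_integrable 0 2).const_mul (1:ℝ)
  have i2 := (moment_integrable 1 2).const_mul (-1:ℝ)
  have i3 := (moment_integrable 2 2).const_mul ((1:ℝ)/2)
  have i4 := (moment_integrable 3 2).const_mul (-(1:ℝ)/6)
  have i5 := (moment_integrable 4 2).const_mul ((1:ℝ)/24)
  have i6 := (moment_integrable 0 3).const_mul aa
  have i7 := (moment_integrable 1 3).const_mul (-aa)
  have i8 := (moment_integrable 0 4).const_mul bb
  have heq : (fun t : ℝ => Real.log t^2*(1 - t + t^2/2 - t^3/6 + t^4/24)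
      + aa*(Real.log t^3*(1-t)) + bb*Real.log t^4)
      = fun t : ℝ => (1:ℝ)*(t^0*Real.log t^2) + (-1)*(t^1*Real.log t^2)
        + (1/2)*(t^2*Real.log t^2) + (-1/6)*(t^3*Real.log t^2) + (1/24)*(t^4*Real.log t^2)
        + aa*(t^0*Real.log t^3) + (-aa)*(t^1*Real.log t^3) + bb*(t^0*Real.log t^4) := by
    funext t; ring
  have s2 : IntegrableOn (fun t : ℝ => (1:ℝ)*(t^0*Real.log t^2) + (-1)*(t^1*Real.log t^2))
      (Ioc (0:ℝ) 1) := i1.add i2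
  have s3 : IntegrableOn (fun t : ℝ => (1:ℝ)*(t^0*Real.log t^2) + (-1)*(t^1*Real.log t^2)
      + (1/2)*(t^2*Real.log t^2)) (Ioc (0:ℝ) 1) := s2.add i3
  have s4 : IntegrableOn (fun t : ℝ => (1:ℝ)*(t^0*Real.log t^2) + (-1)*(t^1*Real.log t^2)
      + (1/2)*(t^2*Real.log t^2) + (-1/6)*(t^3*Real.log t^2)) (Ioc (0:ℝ) 1) := s3.add i4
  have s5 : IntegrableOn (fun t : ℝ => (1:ℝ)*(t^0*Real.log t^2) + (-1)*(t^1*Real.log t^2)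
      + (1/2)*(t^2*Real.log t^2) + (-1/6)*(t^3*Real.log t^2) + (1/24)*(t^4*Real.log t^2))
      (Ioc (0:ℝ) 1) := s4.add i5
  have s6 : IntegrableOn (fun t : ℝ => (1:ℝ)*(t^0*Real.log t^2) + (-1)*(t^1*Real.log t^2)
      + (1/2)*(t^2*Real.log t^2) + (-1/6)*(t^3*Real.log t^2) + (1/24)*(t^4*Real.log t^2)
      + aa*(t^0*Real.log t^3)) (Ioc (0:ℝ) 1) := s5.add i6
  have s7 : IntegrableOn (fun t : ℝ => (1:ℝ)*(t^0*Real.log t^2) + (-1)*(t^1*Real.log t^2)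
      + (1/2)*(t^2*Real.log t^2) + (-1/6)*(t^3*Real.log t^2) + (1/24)*(t^4*Real.log t^2)
      + aa*(t^0*Real.log t^3) + (-aa)*(t^1*Real.log t^3)) (Ioc (0:ℝ) 1) := s6.add i7
  rw [heq]
  rw [integral_add s7 i8, integral_add s6 i7, integral_add s5 i6, integral_add s4 i5,
    integral_add s3 i4, integral_add s2 i3, integral_add i1 i2]
  simp only [integral_const_mul]
  rw [moment_eq 0 2, moment_eq 1 2, moment_eq 2 2, moment_eq 3 2, moment_eq 4 2,
    moment_eq 0 3, moment_eq 1 3, moment_eq 0 4]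
  norm_num [Nat.factorial]
  ring

/-! ### The main estimate -/

set_option maxHeartbeats 2000000 in
lemma main_bound {x : ℝ} (hx0 : 0 < x) (hx5 : x < 1/5) :
    Real.Gamma (1 + 3*x) - 2 * Real.Gamma (1 + 2*x) + Real.Gamma (1 + x) ≤ 2 * x^2 := by
  have h3 : (0:ℝ) < 1 + 3*x := by linarith
  have h2 : (0:ℝ) < 1 + 2*x := by linarith
  have h1 : (0:ℝ) < 1 + x := by linarith
  have e3 : Real.Gamma (1+3*x) = ∫ t in Ioi (0:ℝ), Real.exp (-t) * t ^ (3*x) := by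
    rw [Real.Gamma_eq_integral h3, show (1:ℝ)+3*x-1 = 3*x by ring]
  have e2 : Real.Gamma (1+2*x) = ∫ t in Ioi (0:ℝ), Real.exp (-t) * t ^ (2*x) := by
    rw [Real.Gamma_eq_integral h2, show (1:ℝ)+2*x-1 = 2*x by ring]
  have e1 : Real.Gamma (1+x) = ∫ t in Ioi (0:ℝ), Real.exp (-t) * t ^ x := by
    rw [Real.Gamma_eq_integral h1, show (1:ℝ)+x-1 = x by ring]
  have int3 : IntegrableOn (fun t : ℝ => Real.exp (-t) * t ^ (3*x)) (Ioi 0) := by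
    have h := Real.GammaIntegral_convergent h3
    rwa [show (1:ℝ)+3*x-1 = 3*x by ring] at h
  have int2 : IntegrableOn (fun t : ℝ => Real.exp (-t) * t ^ (2*x)) (Ioi 0) := by
    have h := Real.GammaIntegral_convergent h2
    rwa [show (1:ℝ)+2*x-1 = 2*x by ring] at h
  have int1 : IntegrableOn (fun t : ℝ => Real.exp (-t) * t ^ x) (Ioi 0) := by
    have h := Real.GammaIntegral_convergent h1
    rwa [show (1:ℝ)+x-1 = x by ring] at h
  set F : ℝ → ℝ := fun t => Real.exp (-t) * (t ^ (3*x) - 2 * t ^ (2*x) + t ^ x) with hFdef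
  have hFeq : F = fun t : ℝ => Real.exp (-t) * t ^ (3*x) - 2 * (Real.exp (-t) * t ^ (2*x))
      + Real.exp (-t) * t ^ x := by
    funext t; rw [hFdef]; ring
  have hFint : IntegrableOn F (Ioi (0:ℝ)) := by
    rw [hFeq]
    exact (int3.sub (int2.const_mul 2)).add int1
  have int2' : IntegrableOn (fun t : ℝ => 2 * (Real.exp (-t) * t ^ (2*x))) (Ioi 0) :=
    int2.const_mul 2
  have intA : IntegrableOn (fun t : ℝ => Real.exp (-t) * t ^ (3*x)
      - 2 * (Real.exp (-t) * t ^ (2*x))) (Ioi 0) := int3.sub int2'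
  have hcomb : Real.Gamma (1 + 3*x) - 2 * Real.Gamma (1 + 2*x) + Real.Gamma (1 + x)
      = ∫ t in Ioi (0:ℝ), F t := by
    rw [e3, e2, e1, hFeq, ← integral_const_mul,
      ← integral_sub int3 int2',
      ← integral_add intA int1]
  -- splits
  have hsub1 : Ioc (0:ℝ) 1 ⊆ Ioi 0 := Ioc_subset_Ioi_self
  have hsub2 : Ioc (1:ℝ) (3/2) ⊆ Ioi 0 := fun t ht => lt_trans one_pos ht.1
  have hsub3 : Ioc (3/2:ℝ) 2 ⊆ Ioi 0 := fun t ht => lt_trans (by norm_num) ht.1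
  have hsub4 : Ioi (2:ℝ) ⊆ Ioi 0 := Ioi_subset_Ioi (by norm_num)
  have split1 : ∫ t in Ioi (0:ℝ), F t
      = (∫ t in Ioc (0:ℝ) 1, F t) + ∫ t in Ioi (1:ℝ), F t := by
    rw [← setIntegral_union (Ioc_disjoint_Ioi le_rfl) measurableSet_Ioi
      (hFint.mono_set hsub1) (hFint.mono_set (Ioi_subset_Ioi (by norm_num))),
      Ioc_union_Ioi_eq_Ioi (by norm_num : (0:ℝ) ≤ 1)]
  have split2 : ∫ t in Ioi (1:ℝ), F t
      = (∫ t in Ioc (1:ℝ) (3/2), F t) + ∫ t in Ioi ((3/2:ℝ)), F t := by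
    rw [← setIntegral_union (Ioc_disjoint_Ioi le_rfl) measurableSet_Ioi
      (hFint.mono_set hsub2) (hFint.mono_set (Ioi_subset_Ioi (by norm_num))),
      Ioc_union_Ioi_eq_Ioi (by norm_num : (1:ℝ) ≤ 3/2)]
  have split3 : ∫ t in Ioi ((3/2:ℝ)), F t
      = (∫ t in Ioc (3/2:ℝ) 2, F t) + ∫ t in Ioi ((2:ℝ)), F t := by
    rw [← setIntegral_union (Ioc_disjoint_Ioi le_rfl) measurableSet_Ioi
      (hFint.mono_set hsub3) (hFint.mono_set hsub4),
      Ioc_union_Ioi_eq_Ioi (by norm_num : (3/2:ℝ) ≤ 2)]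
  -- Piece 1
  have hB1 : ∫ t in Ioc (0:ℝ) 1, F t
      ≤ x^2 * (385019/216000 + x * (-45/8) + (x^2/2) * 24) := by
    have hmono : ∫ t in Ioc (0:ℝ) 1, F t
        ≤ ∫ t in Ioc (0:ℝ) 1, x^2 * (Real.log t^2*(1 - t + t^2/2 - t^3/6 + t^4/24)
          + x*(Real.log t^3*(1-t)) + (x^2/2)*Real.log t^4) := by
      refine setIntegral_mono_on (hFint.mono_set hsub1)
        ((D1_integrable x (x^2/2)).const_mul (x^2)) measurableSet_Ioc (fun t ht => ?_)
      exact pointwise_le_one hx0.le ht.1 ht.2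
    rw [integral_const_mul, D1_value] at hmono
    exact hmono
  -- Piece 2
  have hB2 : ∫ t in Ioc (1:ℝ) (3/2), F t
      ≤ x^2 * ((2517590161/2000000000 + (793441/187500)*x) * Real.exp (-1)
        - (81576554669/40000000000 + (106673/15625)*x) * Real.exp (-(3/2))) := by
    have hcont : Continuous (fun t : ℝ => x^2 * (((-3/4 + (77881/100000)*t)^2
        + 3*x*((1/6 + (39/125)*t)^2*(t-1))) * Real.exp (-t))) := by fun_prop
    have hmono : ∫ t in Ioc (1:ℝ) (3/2), F t
        ≤ ∫ t in Ioc (1:ℝ) (3/2), x^2 * (((-3/4 + (77881/100000)*t)^2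
          + 3*x*((1/6 + (39/125)*t)^2*(t-1))) * Real.exp (-t)) := by
      refine setIntegral_mono_on (hFint.mono_set hsub2) (hcont.integrableOn_Ioc)
        measurableSet_Ioc (fun t ht => ?_)
      exact pointwise_ge_one hx0.le hx5.le ht.1.le
        (log_tangent (by norm_num) exp_bound_quarter (lt_trans one_pos ht.1))
    refine le_trans hmono ?_
    rw [integral_const_mul]
    have heq2 : (fun t : ℝ => ((-3/4 + (77881/100000)*t)^2
        + 3*x*((1/6 + (39/125)*t)^2*(t-1))) * Real.exp (-t))
        = fun t : ℝ => ((9/16 - x/12) + (-(233643/200000) - (343/1500)*x)*t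
          + (6065450161/10000000000 + (312/15625)*x)*t^2 + ((4563/15625)*x)*t^3)
            * Real.exp (-t) := by
      funext t; ring
    rw [heq2, integral_cubic_exp_Ioc _ _ _ _ 1 (3/2) (by norm_num)]
    have hEv : ((9/16 - x/12) * Efn 0 1 + (-(233643/200000) - (343/1500)*x) * Efn 1 1
        + (6065450161/10000000000 + (312/15625)*x) * Efn 2 1 + ((4563/15625)*x) * Efn 3 1)
        = 2517590161/2000000000 + (793441/187500)*x := by
      norm_num [Efn]
      ring
    have hEv2 : ((9/16 - x/12) * Efn 0 (3/2) + (-(233643/200000) - (343/1500)*x) * Efn 1 (3/2)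
        + (6065450161/10000000000 + (312/15625)*x) * Efn 2 (3/2)
        + ((4563/15625)*x) * Efn 3 (3/2))
        = 81576554669/40000000000 + (106673/15625)*x := by
      norm_num [Efn]
      ring
    rw [hEv, hEv2]
  -- Piece 3
  have hB3 : ∫ t in Ioc (3/2:ℝ) 2, F t
      ≤ x^2 * ((140123581/100000000 + (106673/15625)*x) * Real.exp (-(3/2))
        - (5274589/2500000 + (986959/93750)*x) * Real.exp (-2)) := by
    have hcont : Continuous (fun t : ℝ => x^2 * (((-1/2 + (3033/5000)*t)^2
        + 3*x*((1/6 + (39/125)*t)^2*(t-1))) * Real.exp (-t))) := by fun_prop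
    have hmono : ∫ t in Ioc (3/2:ℝ) 2, F t
        ≤ ∫ t in Ioc (3/2:ℝ) 2, x^2 * (((-1/2 + (3033/5000)*t)^2
          + 3*x*((1/6 + (39/125)*t)^2*(t-1))) * Real.exp (-t)) := by
      refine setIntegral_mono_on (hFint.mono_set hsub3) (hcont.integrableOn_Ioc)
        measurableSet_Ioc (fun t ht => ?_)
      exact pointwise_ge_one hx0.le hx5.le (by linarith [ht.1])
        (log_tangent (by norm_num) exp_bound_half (by linarith [ht.1]))
    refine le_trans hmono ?_
    rw [integral_const_mul]
    have heq2 : (fun t : ℝ => ((-1/2 + (3033/5000)*t)^2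
        + 3*x*((1/6 + (39/125)*t)^2*(t-1))) * Real.exp (-t))
        = fun t : ℝ => ((1/4 - x/12) + (-(3033/5000) - (343/1500)*x)*t
          + (9199089/25000000 + (312/15625)*x)*t^2 + ((4563/15625)*x)*t^3)
            * Real.exp (-t) := by
      funext t; ring
    rw [heq2, integral_cubic_exp_Ioc _ _ _ _ (3/2) 2 (by norm_num)]
    have hEv : ((1/4 - x/12) * Efn 0 (3/2) + (-(3033/5000) - (343/1500)*x) * Efn 1 (3/2)
        + (9199089/25000000 + (312/15625)*x) * Efn 2 (3/2) + ((4563/15625)*x) * Efn 3 (3/2))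
        = 140123581/100000000 + (106673/15625)*x := by
      norm_num [Efn]
      ring
    have hEv2 : ((1/4 - x/12) * Efn 0 2 + (-(3033/5000) - (343/1500)*x) * Efn 1 2
        + (9199089/25000000 + (312/15625)*x) * Efn 2 2 + ((4563/15625)*x) * Efn 3 2)
        = 5274589/2500000 + (986959/93750)*x := by
      norm_num [Efn]
      ring
    rw [hEv, hEv2]
  -- Piece 4
  have hB4 : ∫ t in Ioi (2:ℝ), F t
      ≤ x^2 * ((147737/112500 + (986959/93750)*x) * Real.exp (-2)) := by
    have hintM : IntegrableOn (fun t : ℝ => x^2 * (((1/36 - x/12) + (13/125 - (343/1500)*x)*t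
        + (1521/15625 + (312/15625)*x)*t^2 + ((4563/15625)*x)*t^3) * Real.exp (-t)))
        (Ioi (2:ℝ)) := by
      have := (integrableOn_cubic_exp (1/36 - x/12) (13/125 - (343/1500)*x)
        (1521/15625 + (312/15625)*x) ((4563/15625)*x) (by norm_num : (0:ℝ) ≤ 2))
      exact this.const_mul (x^2)
    have hmono : ∫ t in Ioi (2:ℝ), F t
        ≤ ∫ t in Ioi (2:ℝ), x^2 * (((1/36 - x/12) + (13/125 - (343/1500)*x)*t
          + (1521/15625 + (312/15625)*x)*t^2 + ((4563/15625)*x)*t^3) * Real.exp (-t)) := by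
      refine setIntegral_mono_on (hFint.mono_set hsub4) hintM
        measurableSet_Ioi (fun t ht => ?_)
      have hpt := pointwise_ge_one hx0.le hx5.le (by linarith [mem_Ioi.1 ht])
        (log_tangent (by norm_num) exp_bound_seven_sixth (by linarith [mem_Ioi.1 ht]))
        (p := 1/6 + (39/125)*t)
      refine le_trans hpt (le_of_eq ?_)
      ring
    refine le_trans hmono ?_
    rw [integral_const_mul, integral_cubic_exp_Ioi _ _ _ _ (by norm_num : (0:ℝ) ≤ 2)]
    have hEv : ((1/36 - x/12) * Efn 0 2 + (13/125 - (343/1500)*x) * Efn 1 2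
        + (1521/15625 + (312/15625)*x) * Efn 2 2 + ((4563/15625)*x) * Efn 3 2)
        = 147737/112500 + (986959/93750)*x := by
      norm_num [Efn]
      ring
    rw [hEv]
  -- Numerics
  have he1 : Real.exp (-1) < 0.3678794412 := Real.exp_neg_one_lt_d9
  have he15 : (0.22313016 : ℝ) ≤ Real.exp (-(3/2)) := exp15_lower
  have he2 : (0.135335283 : ℝ) ≤ Real.exp (-2) := exp2_lower
  have hfinal : (385019/216000 + x * (-45/8) + (x^2/2) * 24)
      + ((2517590161/2000000000 + (793441/187500)*x) * Real.exp (-1)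
        - (81576554669/40000000000 + (106673/15625)*x) * Real.exp (-(3/2)))
      + ((140123581/100000000 + (106673/15625)*x) * Real.exp (-(3/2))
        - (5274589/2500000 + (986959/93750)*x) * Real.exp (-2))
      + ((147737/112500 + (986959/93750)*x) * Real.exp (-2)) ≤ 2 := by
    nlinarith [mul_nonneg hx0.le (sub_nonneg.2 he1.le),
      mul_nonneg hx0.le (sub_nonneg.2 (le_of_lt hx5)),
      mul_pos hx0 hx0, he1, he15, he2, hx0.le, hx5.le,
      mul_nonneg hx0.le (sub_nonneg.2 he2)]
  calc Real.Gamma (1 + 3*x) - 2 * Real.Gamma (1 + 2*x) + Real.Gamma (1 + x)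
      = ∫ t in Ioi (0:ℝ), F t := hcomb
    _ = (∫ t in Ioc (0:ℝ) 1, F t) + ((∫ t in Ioc (1:ℝ) (3/2), F t)
        + ((∫ t in Ioc (3/2:ℝ) 2, F t) + ∫ t in Ioi ((2:ℝ)), F t)) := by
        rw [split1, split2, split3]
    _ ≤ x^2 * (385019/216000 + x * (-45/8) + (x^2/2) * 24)
        + (x^2 * ((2517590161/2000000000 + (793441/187500)*x) * Real.exp (-1)
          - (81576554669/40000000000 + (106673/15625)*x) * Real.exp (-(3/2)))
        + (x^2 * ((140123581/100000000 + (106673/15625)*x) * Real.exp (-(3/2))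
          - (5274589/2500000 + (986959/93750)*x) * Real.exp (-2))
        + x^2 * ((147737/112500 + (986959/93750)*x) * Real.exp (-2)))) :=
        add_le_add hB1 (add_le_add hB2 (add_le_add hB3 hB4))
    _ ≤ 2 * x^2 := by nlinarith [hfinal, sq_nonneg x]

end GammaComb

theorem gamma_combination_bound :
    (fun x : ℝ => Real.Gamma (1 + 3 * x) - 2 * Real.Gamma (1 + 2 * x) + Real.Gamma (1 + x)) 0 = 0 ∧
    deriv (fun x : ℝ => Real.Gamma (1 + 3 * x) - 2 * Real.Gamma (1 + 2 * x) + Real.Gamma (1 + x)) 0 = 0 ∧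
    ∀ x : ℝ, 0 < x → x < 1 / 5 →
      Real.Gamma (1 + 3 * x) - 2 * Real.Gamma (1 + 2 * x) + Real.Gamma (1 + x) ≤ 2 * x ^ 2 := by
  have hne : ∀ m : ℕ, (1:ℝ) ≠ -m := by
    intro m h
    have : (0:ℝ) ≤ m := Nat.cast_nonneg m
    linarith
  have hdiff : DifferentiableAt ℝ Real.Gamma 1 := Real.differentiableAt_Gamma hne
  refine ⟨?_, ?_, ?_⟩
  · norm_num [Real.Gamma_one]
  · have houter : ∀ c : ℝ, HasDerivAt Real.Gamma (deriv Real.Gamma 1) (1 + c * 0) := by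
      intro c
      rw [show (1:ℝ) + c * 0 = 1 by norm_num]
      exact hdiff.hasDerivAt
    have hd3 : HasDerivAt (fun x : ℝ => Real.Gamma (1 + 3 * x)) (deriv Real.Gamma 1 * 3) 0 := by
      have hinner : HasDerivAt (fun x : ℝ => 1 + 3 * x) 3 0 := by
        simpa using ((hasDerivAt_id (0:ℝ)).const_mul (3:ℝ)).const_add 1
      exact (houter 3).comp 0 hinner
    have hd2 : HasDerivAt (fun x : ℝ => Real.Gamma (1 + 2 * x)) (deriv Real.Gamma 1 * 2) 0 := by
      have hinner : HasDerivAt (fun x : ℝ => 1 + 2 * x) 2 0 := by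
        simpa using ((hasDerivAt_id (0:ℝ)).const_mul (2:ℝ)).const_add 1
      exact (houter 2).comp 0 hinner
    have hd1 : HasDerivAt (fun x : ℝ => Real.Gamma (1 + x)) (deriv Real.Gamma 1 * 1) 0 := by
      have hinner : HasDerivAt (fun x : ℝ => 1 + x) 1 0 := by
        simpa using (hasDerivAt_id (0:ℝ)).const_add 1
      have houter1 : HasDerivAt Real.Gamma (deriv Real.Gamma 1) (1 + (0:ℝ)) := by
        rw [show (1:ℝ) + 0 = 1 by norm_num]
        exact hdiff.hasDerivAt
      exact houter1.comp 0 hinner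
    have hsum := (hd3.sub (hd2.const_mul 2)).add hd1
    have : deriv (fun x : ℝ => Real.Gamma (1 + 3 * x) - 2 * Real.Gamma (1 + 2 * x)
        + Real.Gamma (1 + x)) 0
        = deriv Real.Gamma 1 * 3 - 2 * (deriv Real.Gamma 1 * 2) + deriv Real.Gamma 1 * 1 :=
      hsum.deriv
    rw [this]
    ring
  · intro x hx0 hx5
    exact GammaComb.main_bound hx0 (by linarith)
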